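/- Let v ∈ L²((0,π), ℂ), α ∈ ℝ, and define W(λ) = ∫₀^π (sin λx/λ) conj(v(x)) dx + ∫₀^π (sin λ(π−x)/λ) conj(v(x)) dx, N(λ) = ∫₀^π (cos λt − cos λ(π−t)) v(t) dt, F(λ) = ∫₀^π (sin λ(π−x)/λ)(∫₀^x cos(λt) v(t) dt) conj(v(x)) dx, and G(λ) = ∫₀^π (∫₀^x (sin λ(x−t)/λ) v(t) dt) conj(v(x)) dx. Then for every λ ∈ ℂ with λ ≠ 0 and Δ(0,λ) ≠ 0, one has Δ(0,λ) + 2α·[ W(λ)N(λ)/Δ(0,λ) − F(λ) − F*(λ) − G(λ) ] = Δ(0,λ) + (α/(2iλ))·(R(λ) − R(−λ)). -/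

import Mathlib

open MeasureTheory intervalIntegral Set

lemma pi_nonneg' : (0:ℝ) ≤ Real.pi := Real.pi_pos.le

noncomputable def SIa (f : ℝ → ℂ) (μ : ℂ) : ℂ :=
  ∫ x in (0:ℝ)..Real.pi, Complex.exp (μ * (x:ℂ)) * f x

noncomputable def TIa (f g : ℝ → ℂ) (μ ν : ℂ) : ℂ :=
  ∫ x in (0:ℝ)..Real.pi,
    (∫ t in (0:ℝ)..x, Complex.exp (ν * (t:ℂ)) * g t) * (Complex.exp (μ * (x:ℂ)) * f x)

lemma IntegrableOn.conj' {f : ℝ → ℂ} {s : Set ℝ}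
    (h : IntegrableOn f s) : IntegrableOn (fun x => (starRingEnd ℂ) (f x)) s := by
  refine ⟨Complex.continuous_conj.comp_aestronglyMeasurable h.1, ?_⟩
  simpa [MeasureTheory.HasFiniteIntegral] using h.2

lemma expMulII {f : ℝ → ℂ} (hf : IntervalIntegrable f volume 0 Real.pi) (μ : ℂ) :
    IntervalIntegrable (fun x => Complex.exp (μ * (x:ℂ)) * f x) volume 0 Real.pi :=
  hf.continuousOn_mul
    ((Complex.continuous_exp.comp (continuous_const.mul Complex.continuous_ofReal)).continuousOn)

lemma expMulII_sub {f : ℝ → ℂ} (hf : IntervalIntegrable f volume 0 Real.pi) (μ : ℂ)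
    {x : ℝ} (hx : x ∈ Set.Icc (0:ℝ) Real.pi) :
    IntervalIntegrable (fun t : ℝ => Complex.exp (μ * (t:ℂ)) * f t) volume 0 x :=
  (expMulII hf μ).mono_set
    (by rw [Set.uIcc_of_le hx.1, Set.uIcc_of_le pi_nonneg']; exact Set.Icc_subset_Icc le_rfl hx.2)

lemma primContOn {g : ℝ → ℂ} (hg : IntervalIntegrable g volume 0 Real.pi) (ν : ℂ) :
    ContinuousOn (fun x => ∫ t in (0:ℝ)..x, Complex.exp (ν * (t:ℂ)) * g t)
      (Set.Icc (0:ℝ) Real.pi) := by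
  have h1 : IntegrableOn (fun t : ℝ => Complex.exp (ν * (t:ℂ)) * g t) (Set.Ioc 0 Real.pi) volume :=
    (intervalIntegrable_iff_integrableOn_Ioc_of_le pi_nonneg').1 (expMulII hg ν)
  have h2 : IntegrableOn (fun t : ℝ => Complex.exp (ν * (t:ℂ)) * g t)
      (Set.uIcc (0:ℝ) Real.pi) volume := by
    rw [Set.uIcc_of_le pi_nonneg', integrableOn_Icc_iff_integrableOn_Ioc]
    exact h1
  have := continuousOn_primitive_interval (μ := volume) h2
  rwa [Set.uIcc_of_le pi_nonneg'] at this

lemma TIintegrandII {f g : ℝ → ℂ} (hf : IntervalIntegrable f volume 0 Real.pi)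
    (hg : IntervalIntegrable g volume 0 Real.pi) (μ ν : ℂ) :
    IntervalIntegrable
      (fun x => (∫ t in (0:ℝ)..x, Complex.exp (ν * (t:ℂ)) * g t) * (Complex.exp (μ * (x:ℂ)) * f x))
      volume 0 Real.pi :=
  (expMulII hf μ).continuousOn_mul
    (by rw [Set.uIcc_of_le pi_nonneg']; exact primContOn hg ν)
lemma primContOn0 {g : ℝ → ℂ} (hg : IntervalIntegrable g volume 0 Real.pi) :
    ContinuousOn (fun x => ∫ t in (0:ℝ)..x, g t) (Set.Icc (0:ℝ) Real.pi) := by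
  have h2 : IntegrableOn g (Set.uIcc (0:ℝ) Real.pi) volume := by
    rw [Set.uIcc_of_le pi_nonneg', integrableOn_Icc_iff_integrableOn_Ioc]
    exact (intervalIntegrable_iff_integrableOn_Ioc_of_le pi_nonneg').1 hg
  have := continuousOn_primitive_interval (μ := volume) h2
  rwa [Set.uIcc_of_le pi_nonneg'] at this

lemma key_fubini {f g : ℝ → ℂ} (hf : IntegrableOn f (Set.Ioc 0 Real.pi))
    (hg : IntegrableOn g (Set.Ioc 0 Real.pi)) :
    (∫ x in (0:ℝ)..Real.pi, (∫ t in (0:ℝ)..x, g t) * f x)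
      + (∫ x in (0:ℝ)..Real.pi, (∫ t in (0:ℝ)..x, f t) * g x)
    = (∫ t in (0:ℝ)..Real.pi, g t) * (∫ x in (0:ℝ)..Real.pi, f x) := by
  have hπ := pi_nonneg'
  have hfI : IntervalIntegrable f volume 0 Real.pi :=
    (intervalIntegrable_iff_integrableOn_Ioc_of_le hπ).2 hf
  have hgI : IntervalIntegrable g volume 0 Real.pi :=
    (intervalIntegrable_iff_integrableOn_Ioc_of_le hπ).2 hg
  set μ0 := volume.restrict (Set.Ioc (0:ℝ) Real.pi) with hμ0
  have hmeas : MeasurableSet {p : ℝ × ℝ | p.2 ≤ p.1} :=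
    measurableSet_le measurable_snd measurable_fst
  have h1 : Integrable (fun p : ℝ × ℝ => f p.1 * g p.2) (μ0.prod μ0) :=
    Integrable.mul_prod hf hg
  have h3 : Integrable
      (Function.uncurry (fun x t : ℝ => Set.indicator (Set.Iic x) g t * f x))
      (μ0.prod μ0) := by
    refine (h1.indicator hmeas).congr (Filter.Eventually.of_forall ?_)
    rintro ⟨x, t⟩
    by_cases h : t ≤ x <;>
      simp [Function.uncurry, Set.indicator_apply, h, mul_comm]
  have hswap := MeasureTheory.integral_integral_swap h3
  have hL : (∫ x, ∫ t, Set.indicator (Set.Iic x) g t * f x ∂μ0 ∂μ0)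
      = ∫ x in (0:ℝ)..Real.pi, (∫ t in (0:ℝ)..x, g t) * f x := by
    rw [intervalIntegral.integral_of_le hπ]
    refine setIntegral_congr_fun measurableSet_Ioc (fun x hx => ?_)
    rw [MeasureTheory.integral_mul_const]
    congr 1
    rw [MeasureTheory.integral_indicator measurableSet_Iic, hμ0,
      Measure.restrict_restrict measurableSet_Iic]
    have hset : Set.Iic x ∩ Set.Ioc 0 Real.pi = Set.Ioc 0 x := by
      ext t
      simp only [Set.mem_inter_iff, Set.mem_Iic, Set.mem_Ioc]
      constructor
      · rintro ⟨h1', h2', _⟩; exact ⟨h2', h1'⟩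
      · rintro ⟨h1', h2'⟩; exact ⟨h2', h1', h2'.trans hx.2⟩
    rw [hset, intervalIntegral.integral_of_le hx.1.le]
  have hR : (∫ t, ∫ x, Set.indicator (Set.Iic x) g t * f x ∂μ0 ∂μ0)
      = (∫ t in (0:ℝ)..Real.pi, g t) * (∫ x in (0:ℝ)..Real.pi, f x)
        - ∫ x in (0:ℝ)..Real.pi, (∫ t in (0:ℝ)..x, f t) * g x := by
    have hstep : ∀ t ∈ Set.Ioc (0:ℝ) Real.pi,
        (∫ x, Set.indicator (Set.Iic x) g t * f x ∂μ0)
        = g t * (∫ x in (0:ℝ)..Real.pi, f x) - (∫ x in (0:ℝ)..t, f x) * g t := by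
      intro t ht
      have hfn : (fun x => Set.indicator (Set.Iic x) g t * f x)
          = Set.indicator (Set.Ici t) (fun x => g t * f x) := by
        funext x
        by_cases h : t ≤ x <;> simp [Set.indicator_apply, h]
      rw [hfn, MeasureTheory.integral_indicator measurableSet_Ici, hμ0,
        Measure.restrict_restrict measurableSet_Ici]
      have hset : Set.Ici t ∩ Set.Ioc 0 Real.pi = Set.Icc t Real.pi := by
        ext x
        simp only [Set.mem_inter_iff, Set.mem_Ici, Set.mem_Ioc, Set.mem_Icc]
        constructor
        · rintro ⟨h1', h2', h3'⟩; exact ⟨h1', h3'⟩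
        · rintro ⟨h1', h2'⟩; exact ⟨h1', ht.1.trans_le h1', h2'⟩
      rw [hset, MeasureTheory.integral_const_mul, integral_Icc_eq_integral_Ioc,
        ← intervalIntegral.integral_of_le ht.2]
      have hsub : (∫ x in (0:ℝ)..Real.pi, f x) - ∫ x in (0:ℝ)..t, f x
          = ∫ x in t..Real.pi, f x :=
        intervalIntegral.integral_interval_sub_left hfI
          (hfI.mono_set (by
            rw [Set.uIcc_of_le ht.1.le, Set.uIcc_of_le hπ]
            exact Set.Icc_subset_Icc le_rfl ht.2))
      rw [← hsub]
      ring
    rw [MeasureTheory.setIntegral_congr_fun measurableSet_Ioc hstep]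
    have hint1 : Integrable (fun t => g t * (∫ x in (0:ℝ)..Real.pi, f x)) μ0 :=
      hg.mul_const _
    have hint2 : Integrable (fun t => (∫ x in (0:ℝ)..t, f x) * g t) μ0 := by
      have := hg.continuousOn_mul_of_subset (primContOn0 hfI) isCompact_Icc
        measurableSet_Ioc Set.Ioc_subset_Icc_self
      exact this
    rw [MeasureTheory.integral_sub hint1 hint2, MeasureTheory.integral_mul_const,
      ← intervalIntegral.integral_of_le hπ, ← intervalIntegral.integral_of_le hπ]
  rw [hL, hR] at hswap
  linear_combination hswap

lemma intervalIntegral_conj' {f : ℝ → ℂ} {a b : ℝ} :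
    (∫ x in a..b, (starRingEnd ℂ) (f x)) = (starRingEnd ℂ) (∫ x in a..b, f x) := by
  simp only [intervalIntegral]
  rw [integral_conj, integral_conj, ← map_sub]

lemma sin_div_expand {m : ℂ} (hm : m ≠ 0) (z : ℂ) :
    Complex.sin (m * z) / m
      = (2*Complex.I*m)⁻¹ * Complex.exp ((Complex.I*m)*z)
        - (2*Complex.I*m)⁻¹ * Complex.exp ((-(Complex.I*m))*z) := by
  rw [show (Complex.I*m)*z = (m*z)*Complex.I from by ring,
    show (-(Complex.I*m))*z = -(m*z)*Complex.I from by ring, Complex.sin]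
  have hI := Complex.I_ne_zero
  field_simp
  ring_nf
  rw [Complex.I_sq]
  ring

lemma cos_expand (m z : ℂ) :
    Complex.cos (m * z)
      = (2:ℂ)⁻¹ * Complex.exp ((Complex.I*m)*z) + (2:ℂ)⁻¹ * Complex.exp ((-(Complex.I*m))*z) := by
  rw [show (Complex.I*m)*z = (m*z)*Complex.I from by ring,
    show (-(Complex.I*m))*z = -(m*z)*Complex.I from by ring, Complex.cos]
  ring

lemma isplit2 {a b : ℝ} {f₁ f₂ : ℝ → ℂ} (h₁ : IntervalIntegrable f₁ volume a b)
    (h₂ : IntervalIntegrable f₂ volume a b) (c₁ c₂ : ℂ) :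
    (∫ x in a..b, (c₁ * f₁ x + c₂ * f₂ x))
      = c₁ * (∫ x in a..b, f₁ x) + c₂ * (∫ x in a..b, f₂ x) := by
  rw [integral_add (h₁.const_mul c₁) (h₂.const_mul c₂), intervalIntegral.integral_const_mul, intervalIntegral.integral_const_mul]

lemma isplit4 {a b : ℝ} {f₁ f₂ f₃ f₄ : ℝ → ℂ} (h₁ : IntervalIntegrable f₁ volume a b)
    (h₂ : IntervalIntegrable f₂ volume a b) (h₃ : IntervalIntegrable f₃ volume a b)
    (h₄ : IntervalIntegrable f₄ volume a b) (c₁ c₂ c₃ c₄ : ℂ) :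
    (∫ x in a..b, (c₁ * f₁ x + c₂ * f₂ x + (c₃ * f₃ x + c₄ * f₄ x)))
      = c₁ * (∫ x in a..b, f₁ x) + c₂ * (∫ x in a..b, f₂ x)
        + (c₃ * (∫ x in a..b, f₃ x) + c₄ * (∫ x in a..b, f₄ x)) := by
  rw [integral_add ((h₁.const_mul c₁).add (h₂.const_mul c₂))
    ((h₃.const_mul c₃).add (h₄.const_mul c₄)), isplit2 h₁ h₂, isplit2 h₃ h₄]

lemma SIa_conj (f : ℝ → ℂ) (μ : ℂ) :
    (starRingEnd ℂ) (SIa f μ)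
      = SIa (fun x => (starRingEnd ℂ) (f x)) ((starRingEnd ℂ) μ) := by
  rw [SIa, SIa, ← intervalIntegral_conj']
  refine intervalIntegral.integral_congr fun x _ => ?_
  simp only [map_mul, ← Complex.exp_conj, Complex.conj_ofReal]

lemma TIa_conj (f g : ℝ → ℂ) (μ ν : ℂ) :
    (starRingEnd ℂ) (TIa f g μ ν)
      = TIa (fun x => (starRingEnd ℂ) (f x)) (fun x => (starRingEnd ℂ) (g x))
          ((starRingEnd ℂ) μ) ((starRingEnd ℂ) ν) := by
  rw [TIa, TIa, ← intervalIntegral_conj']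
  refine intervalIntegral.integral_congr fun x _ => ?_
  simp only [map_mul, ← Complex.exp_conj, Complex.conj_ofReal, ← intervalIntegral_conj']

lemma TIa_pair {f g : ℝ → ℂ} (hf : IntervalIntegrable f volume 0 Real.pi)
    (hg : IntervalIntegrable g volume 0 Real.pi) (μ ν : ℂ) :
    TIa f g μ ν + TIa g f ν μ = SIa g ν * SIa f μ := by
  have hf' := (intervalIntegrable_iff_integrableOn_Ioc_of_le pi_nonneg').1 (expMulII hf μ)
  have hg' := (intervalIntegrable_iff_integrableOn_Ioc_of_le pi_nonneg').1 (expMulII hg ν)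
  rw [TIa, TIa, SIa, SIa]
  exact key_fubini hf' hg'

lemma W1decomp {m : ℂ} (hm : m ≠ 0) {u : ℝ → ℂ}
    (hu : IntervalIntegrable u volume 0 Real.pi) :
    (∫ x in (0:ℝ)..Real.pi, (Complex.sin (m * x) / m) * u x)
      = (2*Complex.I*m)⁻¹ * SIa u (Complex.I*m)
        - (2*Complex.I*m)⁻¹ * SIa u (-(Complex.I*m)) := by
  have hpt : Set.EqOn (fun x : ℝ => (Complex.sin (m*x)/m) * u x)
      (fun x : ℝ => (2*Complex.I*m)⁻¹ * (Complex.exp ((Complex.I*m)*(x:ℂ)) * u x)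
        + (-(2*Complex.I*m)⁻¹) * (Complex.exp ((-(Complex.I*m))*(x:ℂ)) * u x))
      (Set.uIcc 0 Real.pi) := fun x _ => by
    simp only
    rw [sin_div_expand hm (x:ℂ)]; ring
  rw [intervalIntegral.integral_congr hpt, isplit2 (expMulII hu _) (expMulII hu _),
    SIa, SIa]
  ring

lemma W2decomp {m : ℂ} (hm : m ≠ 0) {u : ℝ → ℂ}
    (hu : IntervalIntegrable u volume 0 Real.pi) :
    (∫ x in (0:ℝ)..Real.pi, (Complex.sin (m * ((Real.pi : ℂ) - x)) / m) * u x)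
      = (2*Complex.I*m)⁻¹ *
          (Complex.exp (Complex.I*m*(Real.pi:ℂ)) * SIa u (-(Complex.I*m))
            - Complex.exp (-(Complex.I*m)*(Real.pi:ℂ)) * SIa u (Complex.I*m)) := by
  have hpt : Set.EqOn (fun x : ℝ => (Complex.sin (m*((Real.pi:ℂ)-x))/m) * u x)
      (fun x : ℝ =>
        ((2*Complex.I*m)⁻¹ * Complex.exp (Complex.I*m*(Real.pi:ℂ)))
            * (Complex.exp ((-(Complex.I*m))*(x:ℂ)) * u x)
        + (-((2*Complex.I*m)⁻¹ * Complex.exp (-(Complex.I*m)*(Real.pi:ℂ))))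
            * (Complex.exp ((Complex.I*m)*(x:ℂ)) * u x))
      (Set.uIcc 0 Real.pi) := fun x _ => by
    simp only
    rw [sin_div_expand hm ((Real.pi:ℂ)-(x:ℂ)),
      show (Complex.I*m)*((Real.pi:ℂ)-(x:ℂ))
          = Complex.I*m*(Real.pi:ℂ) + (-(Complex.I*m))*(x:ℂ) from by ring,
      show (-(Complex.I*m))*((Real.pi:ℂ)-(x:ℂ))
          = -(Complex.I*m)*(Real.pi:ℂ) + (Complex.I*m)*(x:ℂ) from by ring,
      Complex.exp_add, Complex.exp_add]
    ring
  rw [intervalIntegral.integral_congr hpt, isplit2 (expMulII hu _) (expMulII hu _),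
    SIa, SIa]
  ring

lemma Ndecomp {m : ℂ} {w : ℝ → ℂ}
    (hw : IntervalIntegrable w volume 0 Real.pi) :
    (∫ t in (0:ℝ)..Real.pi,
        (Complex.cos (m * t) - Complex.cos (m * ((Real.pi : ℂ) - t))) * w t)
      = (2:ℂ)⁻¹ *
          ((1 - Complex.exp (-(Complex.I*m)*(Real.pi:ℂ))) * SIa w (Complex.I*m)
            + (1 - Complex.exp (Complex.I*m*(Real.pi:ℂ))) * SIa w (-(Complex.I*m))) := by
  have hpt : Set.EqOn
      (fun t : ℝ => (Complex.cos (m*t) - Complex.cos (m*((Real.pi:ℂ)-t))) * w t)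
      (fun t : ℝ =>
        ((2:ℂ)⁻¹ * (1 - Complex.exp (-(Complex.I*m)*(Real.pi:ℂ))))
            * (Complex.exp ((Complex.I*m)*(t:ℂ)) * w t)
        + ((2:ℂ)⁻¹ * (1 - Complex.exp (Complex.I*m*(Real.pi:ℂ))))
            * (Complex.exp ((-(Complex.I*m))*(t:ℂ)) * w t))
      (Set.uIcc 0 Real.pi) := fun t _ => by
    simp only
    rw [cos_expand m (t:ℂ), cos_expand m ((Real.pi:ℂ)-(t:ℂ)),
      show (Complex.I*m)*((Real.pi:ℂ)-(t:ℂ))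
          = Complex.I*m*(Real.pi:ℂ) + (-(Complex.I*m))*(t:ℂ) from by ring,
      show (-(Complex.I*m))*((Real.pi:ℂ)-(t:ℂ))
          = -(Complex.I*m)*(Real.pi:ℂ) + (Complex.I*m)*(t:ℂ) from by ring,
      Complex.exp_add, Complex.exp_add]
    ring
  rw [intervalIntegral.integral_congr hpt, isplit2 (expMulII hw _) (expMulII hw _),
    SIa, SIa]
  ring

lemma Gdecomp {m : ℂ} (hm : m ≠ 0) {u w : ℝ → ℂ}
    (hu : IntervalIntegrable u volume 0 Real.pi)
    (hw : IntervalIntegrable w volume 0 Real.pi) :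
    (∫ x in (0:ℝ)..Real.pi,
        (∫ t in (0:ℝ)..x, (Complex.sin (m * ((x:ℂ) - t)) / m) * w t) * u x)
      = (2*Complex.I*m)⁻¹ *
          (TIa u w (Complex.I*m) (-(Complex.I*m)) - TIa u w (-(Complex.I*m)) (Complex.I*m)) := by
  have houter : Set.EqOn
      (fun x : ℝ => (∫ t in (0:ℝ)..x, (Complex.sin (m * ((x:ℂ) - t)) / m) * w t) * u x)
      (fun x : ℝ =>
        (2*Complex.I*m)⁻¹ *
          ((∫ t in (0:ℝ)..x, Complex.exp ((-(Complex.I*m))*(t:ℂ)) * w t)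
            * (Complex.exp ((Complex.I*m)*(x:ℂ)) * u x))
        + (-(2*Complex.I*m)⁻¹) *
          ((∫ t in (0:ℝ)..x, Complex.exp ((Complex.I*m)*(t:ℂ)) * w t)
            * (Complex.exp ((-(Complex.I*m))*(x:ℂ)) * u x)))
      (Set.uIcc 0 Real.pi) := by
    intro x hx
    rw [Set.uIcc_of_le pi_nonneg'] at hx
    simp only
    have hpt : Set.EqOn (fun t : ℝ => (Complex.sin (m * ((x:ℂ) - t)) / m) * w t)
        (fun t : ℝ =>
          ((2*Complex.I*m)⁻¹ * Complex.exp ((Complex.I*m)*(x:ℂ)))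
            * (Complex.exp ((-(Complex.I*m))*(t:ℂ)) * w t)
          + (-((2*Complex.I*m)⁻¹ * Complex.exp ((-(Complex.I*m))*(x:ℂ))))
            * (Complex.exp ((Complex.I*m)*(t:ℂ)) * w t)) (Set.uIcc 0 x) := fun t _ => by
      simp only
      rw [sin_div_expand hm ((x:ℂ)-(t:ℂ)),
        show (Complex.I*m)*((x:ℂ)-(t:ℂ))
            = (Complex.I*m)*(x:ℂ) + (-(Complex.I*m))*(t:ℂ) from by ring,
        show (-(Complex.I*m))*((x:ℂ)-(t:ℂ))
            = (-(Complex.I*m))*(x:ℂ) + (Complex.I*m)*(t:ℂ) from by ring,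
        Complex.exp_add, Complex.exp_add]
      ring
    rw [intervalIntegral.integral_congr hpt,
      isplit2 (expMulII_sub hw _ hx) (expMulII_sub hw _ hx)]
    ring
  rw [intervalIntegral.integral_congr houter,
    isplit2 (TIintegrandII hu hw _ _) (TIintegrandII hu hw _ _), TIa, TIa]
  ring

lemma Phidecomp {u w : ℝ → ℂ} (m : ℂ) :
    (∫ x in (0:ℝ)..Real.pi,
        (∫ t in (0:ℝ)..x, Complex.exp (-Complex.I * m * ((x:ℂ) - t)) * w t) * u x)
      = TIa u w (-(Complex.I*m)) (Complex.I*m) := by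
  have houter : Set.EqOn
      (fun x : ℝ =>
        (∫ t in (0:ℝ)..x, Complex.exp (-Complex.I * m * ((x:ℂ) - t)) * w t) * u x)
      (fun x : ℝ =>
        (∫ t in (0:ℝ)..x, Complex.exp ((Complex.I*m)*(t:ℂ)) * w t)
          * (Complex.exp ((-(Complex.I*m))*(x:ℂ)) * u x))
      (Set.uIcc 0 Real.pi) := by
    intro x _
    simp only
    have hpt : Set.EqOn (fun t : ℝ => Complex.exp (-Complex.I * m * ((x:ℂ) - t)) * w t)
        (fun t : ℝ => Complex.exp ((-(Complex.I*m))*(x:ℂ))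
          * (Complex.exp ((Complex.I*m)*(t:ℂ)) * w t)) (Set.uIcc 0 x) := fun t _ => by
      simp only
      rw [show -Complex.I*m*((x:ℂ)-(t:ℂ))
          = (-(Complex.I*m))*(x:ℂ) + (Complex.I*m)*(t:ℂ) from by ring, Complex.exp_add]
      ring
    rw [intervalIntegral.integral_congr hpt, intervalIntegral.integral_const_mul]
    ring
  rw [intervalIntegral.integral_congr houter, TIa]

lemma Fdecomp {m : ℂ} (hm : m ≠ 0) {u w : ℝ → ℂ}
    (hu : IntervalIntegrable u volume 0 Real.pi)
    (hw : IntervalIntegrable w volume 0 Real.pi) :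
    (∫ x in (0:ℝ)..Real.pi, (Complex.sin (m * ((Real.pi:ℂ) - x)) / m)
        * (∫ t in (0:ℝ)..x, Complex.cos (m * t) * w t) * u x)
      = (4*Complex.I*m)⁻¹ *
          (Complex.exp (Complex.I*m*(Real.pi:ℂ)) * TIa u w (-(Complex.I*m)) (Complex.I*m)
            + Complex.exp (Complex.I*m*(Real.pi:ℂ)) * TIa u w (-(Complex.I*m)) (-(Complex.I*m))
            - Complex.exp (-(Complex.I*m)*(Real.pi:ℂ)) * TIa u w (Complex.I*m) (Complex.I*m)
            - Complex.exp (-(Complex.I*m)*(Real.pi:ℂ)) * TIa u w (Complex.I*m) (-(Complex.I*m))) := by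
  have houter : Set.EqOn
      (fun x : ℝ => (Complex.sin (m * ((Real.pi:ℂ) - x)) / m)
        * (∫ t in (0:ℝ)..x, Complex.cos (m * t) * w t) * u x)
      (fun x : ℝ =>
        ((4*Complex.I*m)⁻¹ * Complex.exp (Complex.I*m*(Real.pi:ℂ))) *
          ((∫ t in (0:ℝ)..x, Complex.exp ((Complex.I*m)*(t:ℂ)) * w t)
            * (Complex.exp ((-(Complex.I*m))*(x:ℂ)) * u x))
        + ((4*Complex.I*m)⁻¹ * Complex.exp (Complex.I*m*(Real.pi:ℂ))) *
          ((∫ t in (0:ℝ)..x, Complex.exp ((-(Complex.I*m))*(t:ℂ)) * w t)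
            * (Complex.exp ((-(Complex.I*m))*(x:ℂ)) * u x))
        + ((-((4*Complex.I*m)⁻¹ * Complex.exp (-(Complex.I*m)*(Real.pi:ℂ)))) *
            ((∫ t in (0:ℝ)..x, Complex.exp ((Complex.I*m)*(t:ℂ)) * w t)
              * (Complex.exp ((Complex.I*m)*(x:ℂ)) * u x))
          + (-((4*Complex.I*m)⁻¹ * Complex.exp (-(Complex.I*m)*(Real.pi:ℂ)))) *
            ((∫ t in (0:ℝ)..x, Complex.exp ((-(Complex.I*m))*(t:ℂ)) * w t)
              * (Complex.exp ((Complex.I*m)*(x:ℂ)) * u x))))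
      (Set.uIcc 0 Real.pi) := by
    intro x hx
    rw [Set.uIcc_of_le pi_nonneg'] at hx
    simp only
    have hpt : Set.EqOn (fun t : ℝ => Complex.cos (m * t) * w t)
        (fun t : ℝ => (2:ℂ)⁻¹ * (Complex.exp ((Complex.I*m)*(t:ℂ)) * w t)
          + (2:ℂ)⁻¹ * (Complex.exp ((-(Complex.I*m))*(t:ℂ)) * w t)) (Set.uIcc 0 x) :=
      fun t _ => by
        simp only
        rw [cos_expand m (t:ℂ)]; ring
    rw [intervalIntegral.integral_congr hpt,
      isplit2 (expMulII_sub hw _ hx) (expMulII_sub hw _ hx),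
      sin_div_expand hm ((Real.pi:ℂ)-(x:ℂ)),
      show (Complex.I*m)*((Real.pi:ℂ)-(x:ℂ))
          = Complex.I*m*(Real.pi:ℂ) + (-(Complex.I*m))*(x:ℂ) from by ring,
      show (-(Complex.I*m))*((Real.pi:ℂ)-(x:ℂ))
          = -(Complex.I*m)*(Real.pi:ℂ) + (Complex.I*m)*(x:ℂ) from by ring,
      Complex.exp_add, Complex.exp_add]
    ring
  rw [intervalIntegral.integral_congr houter,
    isplit4 (TIintegrandII hu hw _ _) (TIintegrandII hu hw _ _)
      (TIintegrandII hu hw _ _) (TIintegrandII hu hw _ _), TIa, TIa, TIa, TIa]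
  ring

set_option maxHeartbeats 2000000

lemma ftdecomp {w : ℝ → ℂ} (m : ℂ) :
    (∫ x in (0:ℝ)..Real.pi, Complex.exp (-Complex.I * m * x) * w x)
      = SIa w (-(Complex.I*m)) := by
  rw [SIa]
  exact intervalIntegral.integral_congr fun x _ => by
    rw [show -Complex.I*m*(x:ℂ) = (-(Complex.I*m))*(x:ℂ) from by ring]

/-- Fourier transform `ṽ(λ) = ∫₀^π e^{-iλx} v(x) dx`. -/
noncomputable def ftilde (v : ℝ → ℂ) (l : ℂ) : ℂ :=
  ∫ x in (0:ℝ)..Real.pi, Complex.exp (-Complex.I * l * x) * v x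

/-- `Φ(λ) = ∫₀^π (∫₀^x e^{-iλ(x−t)} conj(v(t)) dt) v(x) dx`. -/
noncomputable def PhiFun (v : ℝ → ℂ) (l : ℂ) : ℂ :=
  ∫ x in (0:ℝ)..Real.pi,
    (∫ t in (0:ℝ)..x, Complex.exp (-Complex.I * l * (x - t)) * (starRingEnd ℂ) (v t)) * v x

/-- `Δ(0,λ) = 2(1 − cos πλ)`. -/
noncomputable def Delta0 (l : ℂ) : ℂ := 2 * (1 - Complex.cos (Real.pi * l))

/-- `R(λ) = (1 − e^{-iλπ})(Φ(λ)(1 − e^{iλπ}) − ṽ(λ)ṽ*(λ))`. -/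
noncomputable def Rfun (v : ℝ → ℂ) (l : ℂ) : ℂ :=
  (1 - Complex.exp (-Complex.I * l * Real.pi)) *
    (PhiFun v l * (1 - Complex.exp (Complex.I * l * Real.pi))
      - ftilde v l * (starRingEnd ℂ) (ftilde v ((starRingEnd ℂ) l)))

/-- `W(λ)`, `N(λ)`, `F(λ)`, `G(λ)` from the characteristic determinant. -/
noncomputable def Wfun (v : ℝ → ℂ) (l : ℂ) : ℂ :=
  (∫ x in (0:ℝ)..Real.pi, (Complex.sin (l * x) / l) * (starRingEnd ℂ) (v x))
    + ∫ x in (0:ℝ)..Real.pi,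
        (Complex.sin (l * ((Real.pi : ℂ) - x)) / l) * (starRingEnd ℂ) (v x)

noncomputable def Nfun (v : ℝ → ℂ) (l : ℂ) : ℂ :=
  ∫ t in (0:ℝ)..Real.pi,
    (Complex.cos (l * t) - Complex.cos (l * ((Real.pi : ℂ) - t))) * v t

noncomputable def Ffun (v : ℝ → ℂ) (l : ℂ) : ℂ :=
  ∫ x in (0:ℝ)..Real.pi,
    (Complex.sin (l * ((Real.pi : ℂ) - x)) / l)
      * (∫ t in (0:ℝ)..x, Complex.cos (l * t) * v t) * (starRingEnd ℂ) (v x)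

noncomputable def Gfun (v : ℝ → ℂ) (l : ℂ) : ℂ :=
  ∫ x in (0:ℝ)..Real.pi,
    (∫ t in (0:ℝ)..x, (Complex.sin (l * ((x : ℂ) - t)) / l) * v t) * (starRingEnd ℂ) (v x)

theorem stmt4 (v : ℝ → ℂ)
    (hv : MemLp v 2 (volume.restrict (Set.Ioo (0:ℝ) Real.pi)))
    (α : ℝ) (l : ℂ) (hl : l ≠ 0) (hD : Delta0 l ≠ 0) :
    Delta0 l + 2 * (α : ℂ) *
        (Wfun v l * Nfun v l / Delta0 l - Ffun v l
          - (starRingEnd ℂ) (Ffun v ((starRingEnd ℂ) l)) - Gfun v l)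
      = Delta0 l + ((α : ℂ) / (2 * Complex.I * l)) * (Rfun v l - Rfun v (-l)) := by
  -- integrability
  haveI : IsFiniteMeasure (volume.restrict (Set.Ioo (0:ℝ) Real.pi)) := by
    constructor
    rw [Measure.restrict_apply_univ]
    simp [Real.volume_Ioo]
  have hIoo : IntegrableOn v (Set.Ioo 0 Real.pi) := hv.integrable one_le_two
  have hIoc : IntegrableOn v (Set.Ioc 0 Real.pi) :=
    (integrableOn_Ioc_iff_integrableOn_Ioo enorm_ne_top).2 hIoo
  have hvI : IntervalIntegrable v volume 0 Real.pi :=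
    (intervalIntegrable_iff_integrableOn_Ioc_of_le pi_nonneg').2 hIoc
  have hcvI : IntervalIntegrable (fun x => (starRingEnd ℂ) (v x)) volume 0 Real.pi :=
    (intervalIntegrable_iff_integrableOn_Ioc_of_le pi_nonneg').2 (IntegrableOn.conj' hIoc)
  have hclne : (starRingEnd ℂ) l ≠ 0 := by
    rw [starRingEnd_apply]; exact star_ne_zero.2 hl
  set P := Complex.exp (Complex.I * l * (Real.pi:ℂ)) with hPdef
  have hPne : P ≠ 0 := Complex.exp_ne_zero _
  -- exp atom normalizations
  have hQ4 : Complex.exp (-(Complex.I*l)*(Real.pi:ℂ)) = P⁻¹ := by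
    rw [show -(Complex.I*l)*(Real.pi:ℂ) = -(Complex.I*l*(Real.pi:ℂ)) from by ring,
      Complex.exp_neg]
  have hQ1 : Complex.exp (-Complex.I * l * (Real.pi:ℂ)) = P⁻¹ := by
    rw [show -Complex.I * l * (Real.pi:ℂ) = -(Complex.I*l)*(Real.pi:ℂ) from by ring, hQ4]
  have hQ2 : Complex.exp (-Complex.I * (-l) * (Real.pi:ℂ)) = P := by
    rw [show -Complex.I * (-l) * (Real.pi:ℂ) = Complex.I*l*(Real.pi:ℂ) from by ring]
  have hQ3 : Complex.exp (Complex.I * (-l) * (Real.pi:ℂ)) = P⁻¹ := by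
    rw [show Complex.I * (-l) * (Real.pi:ℂ) = -(Complex.I*l)*(Real.pi:ℂ) from by ring, hQ4]
  have hD0 : Delta0 l = 2 - P - P⁻¹ := by
    rw [Delta0, Complex.cos,
      show (Real.pi:ℂ) * l * Complex.I = Complex.I*l*(Real.pi:ℂ) from by ring,
      show -((Real.pi:ℂ) * l) * Complex.I = -(Complex.I*l)*(Real.pi:ℂ) from by ring,
      hQ4]
    ring
  rw [hD0] at hD
  -- decompositions
  have hW : Wfun v l
      = (2*Complex.I*l)⁻¹ * ((1 - P⁻¹) * SIa (fun x => (starRingEnd ℂ) (v x)) (Complex.I*l)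
          - (1 - P) * SIa (fun x => (starRingEnd ℂ) (v x)) (-(Complex.I*l))) := by
    rw [Wfun, W1decomp hl hcvI, W2decomp hl hcvI, hQ4]
    ring
  have hN : Nfun v l
      = (2:ℂ)⁻¹ * ((1 - P⁻¹) * SIa v (Complex.I*l) + (1 - P) * SIa v (-(Complex.I*l))) := by
    rw [Nfun, Ndecomp hvI, hQ4]
  have hF : Ffun v l
      = (4*Complex.I*l)⁻¹ *
          (P * TIa (fun x => (starRingEnd ℂ) (v x)) v (-(Complex.I*l)) (Complex.I*l)
            + P * TIa (fun x => (starRingEnd ℂ) (v x)) v (-(Complex.I*l)) (-(Complex.I*l))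
            - P⁻¹ * TIa (fun x => (starRingEnd ℂ) (v x)) v (Complex.I*l) (Complex.I*l)
            - P⁻¹ * TIa (fun x => (starRingEnd ℂ) (v x)) v (Complex.I*l) (-(Complex.I*l))) := by
    rw [Ffun, Fdecomp hl hcvI hvI, hQ4]
  have hG : Gfun v l
      = (2*Complex.I*l)⁻¹ *
          (TIa (fun x => (starRingEnd ℂ) (v x)) v (Complex.I*l) (-(Complex.I*l))
            - TIa (fun x => (starRingEnd ℂ) (v x)) v (-(Complex.I*l)) (Complex.I*l)) := by
    rw [Gfun, Gdecomp hl hcvI hvI]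
  have hPhi1 : PhiFun v l = TIa v (fun x => (starRingEnd ℂ) (v x)) (-(Complex.I*l)) (Complex.I*l) := by
    rw [PhiFun]; exact Phidecomp l
  have hPhi2 : PhiFun v (-l)
      = TIa v (fun x => (starRingEnd ℂ) (v x)) (Complex.I*l) (-(Complex.I*l)) := by
    rw [PhiFun, Phidecomp (-l),
      show -(Complex.I*(-l)) = Complex.I*l from by ring,
      show Complex.I*(-l) = -(Complex.I*l) from by ring]
  have hft1 : ftilde v l = SIa v (-(Complex.I*l)) := by
    rw [ftilde]; exact ftdecomp l
  have hft2 : ftilde v (-l) = SIa v (Complex.I*l) := by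
    rw [ftilde, ftdecomp (-l), show -(Complex.I*(-l)) = Complex.I*l from by ring]
  have hft3 : (starRingEnd ℂ) (ftilde v ((starRingEnd ℂ) l))
      = SIa (fun x => (starRingEnd ℂ) (v x)) (Complex.I*l) := by
    rw [ftilde, ftdecomp ((starRingEnd ℂ) l), SIa_conj]
    congr 1
    simp only [map_neg, map_mul, Complex.conj_I, Complex.conj_conj]
    ring
  have hft4 : (starRingEnd ℂ) (ftilde v ((starRingEnd ℂ) (-l)))
      = SIa (fun x => (starRingEnd ℂ) (v x)) (-(Complex.I*l)) := by
    rw [ftilde, ftdecomp ((starRingEnd ℂ) (-l)), SIa_conj]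
    congr 1
    simp only [map_neg, map_mul, Complex.conj_I, Complex.conj_conj]
    ring
  have hFstar : (starRingEnd ℂ) (Ffun v ((starRingEnd ℂ) l))
      = -(4*Complex.I*l)⁻¹ *
          (P⁻¹ * TIa v (fun x => (starRingEnd ℂ) (v x)) (Complex.I*l) (-(Complex.I*l))
            + P⁻¹ * TIa v (fun x => (starRingEnd ℂ) (v x)) (Complex.I*l) (Complex.I*l)
            - P * TIa v (fun x => (starRingEnd ℂ) (v x)) (-(Complex.I*l)) (-(Complex.I*l))
            - P * TIa v (fun x => (starRingEnd ℂ) (v x)) (-(Complex.I*l)) (Complex.I*l)) := by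
    rw [Ffun, Fdecomp hclne hcvI hvI]
    simp only [map_mul, map_sub, map_add, map_inv₀, map_neg, TIa_conj,
      ← Complex.exp_conj, Complex.conj_ofReal, Complex.conj_I, Complex.conj_conj,
      map_ofNat]
    rw [show -Complex.I * l * (Real.pi:ℂ) = -(Complex.I*l)*(Real.pi:ℂ) from by ring, hQ4]
    simp only [show (-Complex.I : ℂ) * l = -(Complex.I*l) from by ring, neg_neg, ← hPdef, hQ4]
    ring
  have hE1 : TIa v (fun x => (starRingEnd ℂ) (v x)) (Complex.I*l) (Complex.I*l)
      = SIa v (Complex.I*l) * SIa (fun x => (starRingEnd ℂ) (v x)) (Complex.I*l)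
        - TIa (fun x => (starRingEnd ℂ) (v x)) v (Complex.I*l) (Complex.I*l) := by
    linear_combination TIa_pair hcvI hvI (Complex.I*l) (Complex.I*l)
  have hE2 : TIa v (fun x => (starRingEnd ℂ) (v x)) (Complex.I*l) (-(Complex.I*l))
      = SIa v (Complex.I*l) * SIa (fun x => (starRingEnd ℂ) (v x)) (-(Complex.I*l))
        - TIa (fun x => (starRingEnd ℂ) (v x)) v (-(Complex.I*l)) (Complex.I*l) := by
    linear_combination TIa_pair hcvI hvI (-(Complex.I*l)) (Complex.I*l)
  have hE3 : TIa v (fun x => (starRingEnd ℂ) (v x)) (-(Complex.I*l)) (Complex.I*l)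
      = SIa v (-(Complex.I*l)) * SIa (fun x => (starRingEnd ℂ) (v x)) (Complex.I*l)
        - TIa (fun x => (starRingEnd ℂ) (v x)) v (Complex.I*l) (-(Complex.I*l)) := by
    linear_combination TIa_pair hcvI hvI (Complex.I*l) (-(Complex.I*l))
  have hE4 : TIa v (fun x => (starRingEnd ℂ) (v x)) (-(Complex.I*l)) (-(Complex.I*l))
      = SIa v (-(Complex.I*l)) * SIa (fun x => (starRingEnd ℂ) (v x)) (-(Complex.I*l))
        - TIa (fun x => (starRingEnd ℂ) (v x)) v (-(Complex.I*l)) (-(Complex.I*l)) := by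
    linear_combination TIa_pair hcvI hvI (-(Complex.I*l)) (-(Complex.I*l))
  have hWN : Wfun v l * Nfun v l / Delta0 l
      = (4*Complex.I*l)⁻¹ *
          (-(P⁻¹ * SIa v (Complex.I*l) * SIa (fun x => (starRingEnd ℂ) (v x)) (Complex.I*l))
            + SIa v (-(Complex.I*l)) * SIa (fun x => (starRingEnd ℂ) (v x)) (Complex.I*l)
            - SIa v (Complex.I*l) * SIa (fun x => (starRingEnd ℂ) (v x)) (-(Complex.I*l))
            + P * SIa v (-(Complex.I*l)) * SIa (fun x => (starRingEnd ℂ) (v x)) (-(Complex.I*l))) := by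
    rw [hW, hN, hD0, div_eq_iff hD]
    field_simp [hPne, hl, Complex.I_ne_zero]
    ring
  rw [Rfun, Rfun, hPhi1, hPhi2, hft1, hft2, hft3, hft4, hQ1, hQ2, hQ3, ← hPdef,
    hWN, hF, hFstar, hG, hE1, hE2, hE3, hE4]
  have hk : Complex.I * l ≠ 0 := mul_ne_zero Complex.I_ne_zero hl
  rw [show (2:ℂ)*Complex.I*l = 2*(Complex.I*l) from by ring,
    show (4:ℂ)*Complex.I*l = 4*(Complex.I*l) from by ring]
  generalize Complex.I * l = k at hk ⊢
  field_simp [hk, hPne]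
  ring
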